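/- For n ≥ 1, every vector u = (b_1,…,b_n,h) ∈ ℤ^{n+1} satisfying ⟨u,(v,1)⟩ ≥ 0 for all v ∈ {0,1}^n satisfies h + Σ_{i : b_i < 0} b_i ≥ 0 and can be written as u = Σ_{i : b_i ≥ 0} b_i·e_i + Σ_{i : b_i < 0} (−b_i)·(e_{n+1} − e_i) + (h + Σ_{i : b_i < 0} b_i)·e_{n+1}, where all coefficients are nonnegative integers. Consequently, since e_{n+1} = e_i + (e_{n+1} − e_i), the additive monoid σ∨ ∩ ℤ^{n+1} is generated by the 2n vectors e_1,…,e_n and e_{n+1}−e_1,…,e_{n+1}−e_n, where σ ⊆ ℝ^{n+1} is the convex cone generated by the vectors (v,1) with v ∈ {0,1}^n and σ∨ is its dual cone. -/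

import Mathlib

open Finset

/-- The convex cone generated by a set of vectors: all finite nonnegative
linear combinations of elements of `S`. -/
def coneGen {m : ℕ} (S : Set (Fin m → ℝ)) : Set (Fin m → ℝ) :=
  {x | ∃ (k : ℕ) (c : Fin k → ℝ) (v : Fin k → Fin m → ℝ),
    (∀ i, 0 ≤ c i) ∧ (∀ i, v i ∈ S) ∧ x = ∑ i, c i • v i}

/-- The dual cone with respect to the standard inner product. -/
def dualCone {m : ℕ} (σ : Set (Fin m → ℝ)) : Set (Fin m → ℝ) :=
  {u | ∀ x ∈ σ, 0 ≤ ∑ i, u i * x i}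

/-- The vertices `(v,1)` of the unit hypercube, `v ∈ {0,1}^n`, viewed in
`ℝ^{n+1}` with last coordinate `1`. -/
def hcVerts (n : ℕ) : Set (Fin (n + 1) → ℝ) :=
  {x | x (Fin.last n) = 1 ∧ ∀ i, i ≠ Fin.last n → (x i = 0 ∨ x i = 1)}

lemma aux_part1 (n : ℕ) (u : Fin (n + 1) → ℤ)
    (hu : ∀ x : Fin (n + 1) → ℤ, x (Fin.last n) = 1 →
      (∀ i, i ≠ Fin.last n → x i = 0 ∨ x i = 1) → 0 ≤ ∑ i, u i * x i) :
    0 ≤ u (Fin.last n) +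
        ∑ i ∈ Finset.univ.filter (fun i : Fin n => u i.castSucc < 0), u i.castSucc := by
  have h := hu (fun j => if j = Fin.last n then 1 else if u j < 0 then 1 else 0)
    (if_pos rfl) (by intro i hi; simp only [if_neg hi]; split_ifs <;> simp)
  rw [Fin.sum_univ_castSucc] at h
  simp only [if_pos, mul_one] at h
  have e : ∀ i : Fin n, (u i.castSucc * if i.castSucc = Fin.last n then 1 else if u i.castSucc < 0 then 1 else 0)
      = if u i.castSucc < 0 then u i.castSucc else 0 := by
    intro i
    rw [if_neg (Fin.castSucc_lt_last i).ne]
    split_ifs <;> ring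
  rw [Finset.sum_congr rfl (fun i _ => e i), ← Finset.sum_filter] at h
  linarith

lemma aux_part2 (n : ℕ) (u : Fin (n + 1) → ℤ) :
    (u = (∑ i ∈ Finset.univ.filter (fun i : Fin n => 0 ≤ u i.castSucc),
            u i.castSucc • Pi.single i.castSucc (1 : ℤ))
        + (∑ i ∈ Finset.univ.filter (fun i : Fin n => u i.castSucc < 0),
            (-(u i.castSucc)) •
              (Pi.single (Fin.last n) (1 : ℤ) - Pi.single i.castSucc 1))
        + (u (Fin.last n) +
            ∑ i ∈ Finset.univ.filter (fun i : Fin n => u i.castSucc < 0), u i.castSucc) •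
            Pi.single (Fin.last n) (1 : ℤ)) := by
  have h1 : ∀ i : Fin n, (Pi.single i.castSucc 1 : Fin (n+1) → ℤ) (Fin.last n) = 0 :=
    by intro i; exact Pi.single_eq_of_ne (Fin.castSucc_lt_last i).ne' 1
  funext j
  induction j using Fin.lastCases with
  | last =>
    simp only [Pi.add_apply, Finset.sum_apply, Pi.smul_apply, smul_eq_mul, Pi.sub_apply,
      Pi.single_eq_same, h1, mul_zero, sub_zero, mul_one, Finset.sum_const_zero, zero_add,
      Finset.sum_neg_distrib]
    ring
  | cast j =>
    have h2 : ∀ i : Fin n, (Pi.single (Fin.last n) 1 : Fin (n+1) → ℤ) j.castSucc = 0 :=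
      by intro _; exact Pi.single_eq_of_ne (Fin.castSucc_lt_last j).ne 1
    have h3 : ∀ i : Fin n, (Pi.single i.castSucc 1 : Fin (n+1) → ℤ) j.castSucc = if j = i then 1 else 0 := by
      intro i
      rw [Pi.single_apply]
      simp [Fin.castSucc_inj]
    simp only [Pi.add_apply, Finset.sum_apply, Pi.smul_apply, smul_eq_mul, Pi.sub_apply,
      h2 j, h3, mul_ite, mul_one, mul_zero, zero_sub, mul_neg, neg_neg,
      Finset.sum_neg_distrib, Finset.sum_ite_eq, Finset.mem_filter, Finset.mem_univ, true_and,
      add_zero]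
    split_ifs <;> omega

lemma aux_sum_single_mul {m : ℕ} (p : Fin m) (x : Fin m → ℝ) :
    ∑ j, (((Pi.single p 1 : Fin m → ℤ) j : ℝ) * x j) = x p := by
  have h : ∀ j, (((Pi.single p 1 : Fin m → ℤ) j : ℝ) * x j) = if j = p then x j else 0 := by
    intro j
    rw [Pi.single_apply]
    split_ifs <;> simp
  rw [Finset.sum_congr rfl (fun j _ => h j), Finset.sum_ite_eq' Finset.univ p x,
    if_pos (Finset.mem_univ p)]

lemma aux_cone_facts {n : ℕ} {x : Fin (n + 1) → ℝ} (hx : x ∈ coneGen (hcVerts n)) :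
    ∀ i : Fin n, 0 ≤ x i.castSucc ∧ x i.castSucc ≤ x (Fin.last n) := by
  obtain ⟨k, c, v, hc, hv, rfl⟩ := hx
  intro i
  have hne := (Fin.castSucc_lt_last i).ne
  have h01 : ∀ l, v l i.castSucc = 0 ∨ v l i.castSucc = 1 := fun l => (hv l).2 _ hne
  have hlast : ∀ l, v l (Fin.last n) = 1 := fun l => (hv l).1
  simp only [Finset.sum_apply, Pi.smul_apply, smul_eq_mul]
  constructor
  · apply Finset.sum_nonneg
    intro l _
    rcases h01 l with h | h <;> rw [h]
    · simp
    · simpa using hc l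
  · apply Finset.sum_le_sum
    intro l _
    rw [hlast l]
    rcases h01 l with h | h
    · rw [h]; simpa using hc l
    · rw [h]

theorem lattice_points_of_dual_hypercube_cone (n : ℕ) (hn : 1 ≤ n)
    (u : Fin (n + 1) → ℤ)
    (hu : ∀ x : Fin (n + 1) → ℤ, x (Fin.last n) = 1 →
      (∀ i, i ≠ Fin.last n → x i = 0 ∨ x i = 1) → 0 ≤ ∑ i, u i * x i) :
    (0 ≤ u (Fin.last n) +
        ∑ i ∈ Finset.univ.filter (fun i : Fin n => u i.castSucc < 0), u i.castSucc) ∧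
    (u = (∑ i ∈ Finset.univ.filter (fun i : Fin n => 0 ≤ u i.castSucc),
            u i.castSucc • Pi.single i.castSucc (1 : ℤ))
        + (∑ i ∈ Finset.univ.filter (fun i : Fin n => u i.castSucc < 0),
            (-(u i.castSucc)) •
              (Pi.single (Fin.last n) (1 : ℤ) - Pi.single i.castSucc 1))
        + (u (Fin.last n) +
            ∑ i ∈ Finset.univ.filter (fun i : Fin n => u i.castSucc < 0), u i.castSucc) •
            Pi.single (Fin.last n) (1 : ℤ)) ∧
    (∀ w : Fin (n + 1) → ℤ,
      w ∈ AddSubmonoid.closure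
        {w' : Fin (n + 1) → ℤ | (∃ i : Fin n, w' = Pi.single i.castSucc 1) ∨
          ∃ i : Fin n, w' = Pi.single (Fin.last n) 1 - Pi.single i.castSucc 1}
      ↔ (fun i => (w i : ℝ)) ∈ dualCone (coneGen (hcVerts n))) := by
  refine ⟨aux_part1 n u hu, aux_part2 n u, ?_⟩
  intro w
  constructor
  · -- forward direction
    intro hw
    induction hw using AddSubmonoid.closure_induction with
    | mem g hg =>
      intro x hx
      rcases hg with ⟨i, rfl⟩ | ⟨i, rfl⟩
      · have : ∑ j, (((Pi.single i.castSucc 1 : Fin (n+1) → ℤ) j : ℝ) * x j) = x i.castSucc :=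
          aux_sum_single_mul i.castSucc x
        rw [this]
        exact (aux_cone_facts hx i).1
      · simp only [Pi.sub_apply, Int.cast_sub, sub_mul, Finset.sum_sub_distrib,
          aux_sum_single_mul]
        linarith [(aux_cone_facts hx i).2]
    | zero =>
      intro x hx
      simp
    | add a b hma hmb ha hb =>
      intro x hx
      simp only [Pi.add_apply, Int.cast_add, add_mul, Finset.sum_add_distrib]
      exact add_nonneg (ha x hx) (hb x hx)
  · -- backward direction
    intro hw
    have hu' : ∀ x : Fin (n + 1) → ℤ, x (Fin.last n) = 1 →
        (∀ i, i ≠ Fin.last n → x i = 0 ∨ x i = 1) → 0 ≤ ∑ i, w i * x i := by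
      intro x hx1 hx2
      have hvert : (fun i => (x i : ℝ)) ∈ hcVerts n := by
        constructor
        · show (x (Fin.last n) : ℝ) = 1
          exact_mod_cast hx1
        · intro i hi
          show (x i : ℝ) = 0 ∨ (x i : ℝ) = 1
          rcases hx2 i hi with h | h
          · left; exact_mod_cast h
          · right; exact_mod_cast h
      have hmem : (fun i => (x i : ℝ)) ∈ coneGen (hcVerts n) :=
        ⟨1, fun _ => 1, fun _ => (fun i => (x i : ℝ)), fun _ => zero_le_one,
          fun _ => hvert, by funext j; simp⟩
      have h := hw (fun i => (x i : ℝ)) hmem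
      have : ((∑ i, w i * x i : ℤ) : ℝ) = ∑ i, ((w i : ℝ) * (x i : ℝ)) := by push_cast; ring
      exact_mod_cast this ▸ h
    have mem1 : ∀ i : Fin n, (Pi.single i.castSucc 1 : Fin (n+1) → ℤ) ∈ AddSubmonoid.closure
        {w' : Fin (n + 1) → ℤ | (∃ i : Fin n, w' = Pi.single i.castSucc 1) ∨
          ∃ i : Fin n, w' = Pi.single (Fin.last n) 1 - Pi.single i.castSucc 1} :=
      fun i => AddSubmonoid.subset_closure (Or.inl ⟨i, rfl⟩)
    have mem2 : ∀ i : Fin n, (Pi.single (Fin.last n) 1 - Pi.single i.castSucc 1 : Fin (n+1) → ℤ) ∈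
        AddSubmonoid.closure
        {w' : Fin (n + 1) → ℤ | (∃ i : Fin n, w' = Pi.single i.castSucc 1) ∨
          ∃ i : Fin n, w' = Pi.single (Fin.last n) 1 - Pi.single i.castSucc 1} :=
      fun i => AddSubmonoid.subset_closure (Or.inr ⟨i, rfl⟩)
    set M := AddSubmonoid.closure
        {w' : Fin (n + 1) → ℤ | (∃ i : Fin n, w' = Pi.single i.castSucc 1) ∨
          ∃ i : Fin n, w' = Pi.single (Fin.last n) 1 - Pi.single i.castSucc 1} with hM
    have smulmem : ∀ (c : ℤ), 0 ≤ c → ∀ g ∈ M, c • g ∈ M := by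
      intro c hc g hg
      obtain ⟨d, rfl⟩ := Int.eq_ofNat_of_zero_le hc
      rw [natCast_zsmul]
      exact AddSubmonoid.nsmul_mem M hg d
    have mem3 : (Pi.single (Fin.last n) 1 : Fin (n+1) → ℤ) ∈ M := by
      have h := M.add_mem (mem1 ⟨0, hn⟩) (mem2 ⟨0, hn⟩)
      have e : (Pi.single (Fin.castSucc ⟨0, hn⟩) 1 : Fin (n+1) → ℤ) +
          (Pi.single (Fin.last n) 1 - Pi.single (Fin.castSucc ⟨0, hn⟩) 1) =
          Pi.single (Fin.last n) 1 := by abel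
      rwa [e] at h
    rw [aux_part2 n w]
    refine M.add_mem (M.add_mem ?_ ?_) ?_
    · exact AddSubmonoid.sum_mem M (fun i hi =>
        smulmem _ (Finset.mem_filter.mp hi).2 _ (mem1 i))
    · refine AddSubmonoid.sum_mem M (fun i hi => ?_)
      have := (Finset.mem_filter.mp hi).2
      exact smulmem _ (by omega) _ (mem2 i)
    · exact smulmem _ (aux_part1 n w hu') _ mem3
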